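/- Let n ≥ 1 and let τ and σ be permutations of ℤ/nℤ such that P_τᵀ · F_n · P_σ = F_n. Then there exist p, r ∈ ℤ/nℤ such that τ(j) = p·j for all j ∈ ℤ/nℤ, σ(k) = r·k for all k ∈ ℤ/nℤ, and p·r = 1 in ℤ/nℤ. -/

import Mathlib

open Matrix Complex

/-- The `n × n` Fourier matrix, with entries `F[j,k] = exp(2πi·jk/n)/√n`. -/
noncomputable def Fourier (n : ℕ) : Matrix (ZMod n) (ZMod n) ℂ :=
  Matrix.of fun j k =>
    ((1 / Real.sqrt n : ℝ) : ℂ) *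
      Complex.exp (2 * Real.pi * Complex.I * ((j.val : ℂ) * (k.val : ℂ)) / (n : ℂ))

/-- The permutation matrix of a map `σ`: `P[j,k] = 1` if `j = σ k`, else `0`. -/
def permMat {n : ℕ} (σ : ZMod n → ZMod n) : Matrix (ZMod n) (ZMod n) ℂ :=
  Matrix.of fun j k => if j = σ k then 1 else 0

lemma entry_eq {n : ℕ} [NeZero n] (τ σ : Equiv.Perm (ZMod n))
    (h : (permMat τ)ᵀ * Fourier n * permMat σ = Fourier n) (j k : ZMod n) :
    Fourier n (τ j) (σ k) = Fourier n j k := by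
  have := congrFun (congrFun h j) k
  simpa [Matrix.mul_apply, permMat, Matrix.transpose_apply, Finset.sum_ite_eq,
    Finset.sum_ite_eq'] using this

lemma key {n : ℕ} [NeZero n] (τ σ : Equiv.Perm (ZMod n))
    (h : (permMat τ)ᵀ * Fourier n * permMat σ = Fourier n) (j k : ZMod n) :
    τ j * σ k = j * k := by
  have hE := entry_eq τ σ h j k
  simp only [Fourier, Matrix.of_apply] at hE
  have hsq : ((Real.sqrt n : ℝ) : ℂ) ≠ 0 := by
    have : (0:ℝ) < Real.sqrt n := Real.sqrt_pos.mpr (by exact_mod_cast Nat.pos_of_ne_zero (NeZero.ne n))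
    exact_mod_cast this.ne'
  have hn' : (n:ℂ) ≠ 0 := by exact_mod_cast (NeZero.ne n)
  have hc : (2 * Real.pi * Complex.I : ℂ) ≠ 0 := by
    simp [Real.pi_ne_zero, Complex.I_ne_zero]
  have hexp := mul_left_cancel₀ (by simpa using hsq) hE
  rw [Complex.exp_eq_exp_iff_exists_int] at hexp
  obtain ⟨m, hm⟩ := hexp
  have hAB : (ZMod.cast (τ j) : ℂ) * ZMod.cast (σ k) = (ZMod.cast j : ℂ) * ZMod.cast k + m * n := by
    field_simp at hm
    rw [← ZMod.natCast_val (τ j), ← ZMod.natCast_val (σ k), ← ZMod.natCast_val j,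
      ← ZMod.natCast_val k]
    linear_combination hm
  rw [← ZMod.natCast_val (τ j), ← ZMod.natCast_val (σ k), ← ZMod.natCast_val j,
    ← ZMod.natCast_val k] at hAB
  have hz : ((τ j).val * (σ k).val : ℤ) = (j.val * k.val : ℤ) + m * n := by
    exact_mod_cast hAB
  have : (((τ j).val * (σ k).val : ℤ) : ZMod n) = ((j.val * k.val : ℤ) : ZMod n) := by
    rw [hz]; push_cast; simp
  push_cast at this
  simpa [ZMod.natCast_val, ZMod.cast_id] using this

theorem fourier_perm_invariance
    (n : ℕ) [NeZero n] (τ σ : Equiv.Perm (ZMod n))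
    (h : (permMat τ)ᵀ * Fourier n * permMat σ = Fourier n) :
    ∃ p r : ZMod n, (∀ j, τ j = p * j) ∧ (∀ k, σ k = r * k) ∧ p * r = 1 := by
  refine ⟨σ.symm 1, τ.symm 1, ?_, ?_, ?_⟩
  · intro j
    have := key τ σ h j (σ.symm 1)
    simpa [mul_comm] using this
  · intro k
    have := key τ σ h (τ.symm 1) k
    simpa [mul_comm] using this
  · have := key τ σ h (τ.symm 1) (σ.symm 1)
    simpa [mul_comm, eq_comm] using this
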